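/- For all integers m, n ≥ 1, P(T, m×n) = ⋃_{i,j∈{1,2}} P_{i,j}(T, m×n), and the four sets P_{i,j}(T, m×n) for i,j∈{1,2} are non-empty and pairwise disjoint. -/

import Mathlib

/-- The 16-letter alphabet 𝒜 = {A,…,P}. -/
inductive A16 : Type
  | A | B | C | D | E | F | G | H | I | J | K | L | M | N | O | P
  deriving DecidableEq

/-- The 2×2 block substitution μ on 𝒜 (rows top to bottom). -/
def mu : A16 → Fin 2 → Fin 2 → A16
  | .A => ![![.A, .F], ![.G, .C]]
  | .B => ![![.A, .F], ![.H, .D]]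
  | .C => ![![.B, .E], ![.G, .C]]
  | .D => ![![.B, .E], ![.H, .D]]
  | .E => ![![.A, .N], ![.G, .K]]
  | .F => ![![.A, .N], ![.H, .L]]
  | .G => ![![.B, .M], ![.G, .K]]
  | .H => ![![.B, .M], ![.H, .L]]
  | .I => ![![.I, .F], ![.O, .C]]
  | .J => ![![.I, .F], ![.P, .D]]
  | .K => ![![.J, .E], ![.O, .C]]
  | .L => ![![.J, .E], ![.P, .D]]
  | .M => ![![.I, .N], ![.O, .K]]
  | .N => ![![.I, .N], ![.P, .L]]
  | .O => ![![.J, .M], ![.O, .K]]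
  | .P => ![![.J, .M], ![.P, .L]]

/-- Entry version of μ, indexed by arbitrary naturals (via mod 2). -/
def muE (x : A16) (r c : ℕ) : A16 :=
  mu x ⟨r % 2, by omega⟩ ⟨c % 2, by omega⟩

/-- `superE n x` is the supertile μⁿ(x), a 2ⁿ×2ⁿ array over 𝒜,
given as a total function on ℕ × ℕ (only indices < 2ⁿ are relevant). -/
def superE : ℕ → A16 → ℕ → ℕ → A16
  | 0, x, _, _ => x
  | n + 1, x, r, c => muE (superE n x (r / 2) (c / 2)) r c

/-- The supertile T_k = μᵏ(N). -/
def Tfun (k : ℕ) : ℕ → ℕ → A16 := superE k .N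

/-- An m×n pattern over the alphabet α. -/
abbrev Pat (α : Type) (m n : ℕ) := Fin m → Fin n → α

/-- The set of m×n patterns occurring in the size×size array X. -/
def patIn {α : Type} (X : ℕ → ℕ → α) (size m n : ℕ) : Set (Pat α m n) :=
  { p | ∃ r c : ℕ, r + m ≤ size ∧ c + n ≤ size ∧
      ∀ (i : Fin m) (j : Fin n), p i j = X (r + i) (c + j) }

/-- P(T, m×n) = ⋃ₖ P(T_k, m×n). -/
def PT (m n : ℕ) : Set (Pat A16 m n) := ⋃ k : ℕ, patIn (Tfun k) (2 ^ k) m n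

/-- μ applied to an m×n pattern, as a total 2m×2n array on ℕ × ℕ
(indices are reduced mod the valid range; in range this is exactly μ(p)). -/
def muPatE {m n : ℕ} (p : Pat A16 m n) (r c : ℕ) : A16 :=
  if hm : 0 < m then
    if hn : 0 < n then
      muE (p ⟨r / 2 % m, Nat.mod_lt _ hm⟩ ⟨c / 2 % n, Nat.mod_lt _ hn⟩) r c
    else .A
  else .A

/-- μ² applied to an m×n pattern, as a total 4m×4n array on ℕ × ℕ. -/
def mu2PatE {m n : ℕ} (p : Pat A16 m n) (r c : ℕ) : A16 :=
  muE (muPatE p (r / 2) (c / 2)) r c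

/-- P_{i,j}(T, m×n) = { μ(x)[i,j,m×n] : x ∈ P(T,m×n) } (1-based corner (i,j)). -/
def Pij (i j m n : ℕ) : Set (Pat A16 m n) :=
  { q | ∃ x ∈ PT m n, ∀ (a : Fin m) (b : Fin n),
      q a b = muPatE x (i - 1 + a) (j - 1 + b) }

/-- Q_{i,j}(T, m×n) = { μ²(x)[i,j,m×n] : x ∈ P(T,m×n) } (1-based corner (i,j)). -/
def Qij (i j m n : ℕ) : Set (Pat A16 m n) :=
  { q | ∃ x ∈ PT m n, ∀ (a : Fin m) (b : Fin n),
      q a b = mu2PatE x (i - 1 + a) (j - 1 + b) }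

/-- The 2×2 block substitution φ from 𝒜 to ℬ = {0,1,2,3}. -/
def phi : A16 → Fin 2 → Fin 2 → Fin 4
  | .A => ![![0, 1], ![0, 0]]
  | .B => ![![0, 1], ![1, 1]]
  | .C => ![![1, 0], ![0, 0]]
  | .D => ![![1, 0], ![1, 1]]
  | .E => ![![0, 3], ![0, 2]]
  | .F => ![![0, 3], ![1, 3]]
  | .G => ![![1, 2], ![0, 2]]
  | .H => ![![1, 2], ![1, 3]]
  | .I => ![![2, 1], ![2, 0]]
  | .J => ![![2, 1], ![3, 1]]
  | .K => ![![3, 0], ![2, 0]]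
  | .L => ![![3, 0], ![3, 1]]
  | .M => ![![2, 3], ![2, 2]]
  | .N => ![![2, 3], ![3, 3]]
  | .O => ![![3, 2], ![2, 2]]
  | .P => ![![3, 2], ![3, 3]]

/-- Entry version of φ, indexed by arbitrary naturals (via mod 2). -/
def phiE (x : A16) (r c : ℕ) : Fin 4 :=
  phi x ⟨r % 2, by omega⟩ ⟨c % 2, by omega⟩

/-- φ applied to an m×n pattern over 𝒜, as a total 2m×2n array on ℕ × ℕ. -/
def phiPatE {m n : ℕ} (p : Pat A16 m n) (r c : ℕ) : Fin 4 :=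
  if hm : 0 < m then
    if hn : 0 < n then
      phiE (p ⟨r / 2 % m, Nat.mod_lt _ hm⟩ ⟨c / 2 % n, Nat.mod_lt _ hn⟩) r c
    else 0
  else 0

/-- φ(T_k), a 2^(k+1)×2^(k+1) array over ℬ. -/
def Sfun (k : ℕ) (r c : ℕ) : Fin 4 := phiE (Tfun k (r / 2) (c / 2)) r c

/-- P(S, m×n) = ⋃_{k≥1} P(φ(T_{k-1}), m×n). -/
def PS (m n : ℕ) : Set (Pat (Fin 4) m n) :=
  ⋃ k : ℕ, patIn (Sfun k) (2 ^ (k + 1)) m n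

/-- P_{i,j}(S, m×n) = { φ(x)[i,j,m×n] : x ∈ P(T,m×n) } (1-based corner (i,j)). -/
def PSij (i j m n : ℕ) : Set (Pat (Fin 4) m n) :=
  { q | ∃ x ∈ PT m n, ∀ (a : Fin m) (b : Fin n),
      q a b = phiPatE x (i - 1 + a) (j - 1 + b) }

/-- A_n = |P(S, n×n)|. -/
noncomputable def Acnt (n : ℕ) : ℕ := Nat.card (PS n n)

/-- a_{i,j}(n) = |P_{i,j}(T, n×n)|. -/
noncomputable def aT (i j n : ℕ) : ℕ := Nat.card (Pij i j n n)

/-- b_{i,j}(n) = |P_{i,j}(T, n×(n+1))|. -/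
noncomputable def bT (i j n : ℕ) : ℕ := Nat.card (Pij i j n (n + 1))

/-- c_{i,j}(n) = |P_{i,j}(T, (n+1)×n)|. -/
noncomputable def cT (i j n : ℕ) : ℕ := Nat.card (Pij i j (n + 1) n)

/-- Quadrant class of a letter. -/
def cls : A16 → ℕ × ℕ
  | .A | .B | .I | .J => (0, 0)
  | .F | .E | .N | .M => (0, 1)
  | .G | .H | .O | .P => (1, 0)
  | .C | .D | .K | .L => (1, 1)

lemma cls_mu (x : A16) (i j : Fin 2) : cls (mu x i j) = (i.val, j.val) := by
  fin_cases i <;> fin_cases j <;> cases x <;> rfl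

lemma cls_muE (x : A16) (r c : ℕ) : cls (muE x r c) = (r % 2, c % 2) := by
  unfold muE; rw [cls_mu]

lemma muE_congr (x : A16) {r c r' c' : ℕ} (hr : r % 2 = r' % 2) (hc : c % 2 = c' % 2) :
    muE x r c = muE x r' c' := by
  simp only [muE, hr, hc]

lemma superE_add (K : ℕ) : ∀ (j : ℕ) (x : A16) (r c a b : ℕ), a < 2 ^ K → b < 2 ^ K →
    superE (K + j) x (2 ^ K * r + a) (2 ^ K * c + b) = superE K (superE j x r c) a b := by
  induction K with
  | zero =>
      intro j x r c a b ha hb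
      interval_cases a
      interval_cases b
      simp [superE]
  | succ K ih =>
      intro j x r c a b ha hb
      rw [Nat.add_right_comm K 1 j]
      show muE (superE (K + j) x _ _) _ _ = muE (superE K (superE j x r c) _ _) _ _
      have h2 : (2:ℕ) ^ (K + 1) = 2 * 2 ^ K := by ring
      have h2r : (2:ℕ) ^ (K + 1) * r = 2 * (2 ^ K * r) := by ring
      have h2c : (2:ℕ) ^ (K + 1) * c = 2 * (2 ^ K * c) := by ring
      have e1 : (2 ^ (K + 1) * r + a) / 2 = 2 ^ K * r + a / 2 := by omega
      have e2 : (2 ^ (K + 1) * c + b) / 2 = 2 ^ K * c + b / 2 := by omega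
      rw [e1, e2, ih j x r c (a / 2) (b / 2) (by omega) (by omega)]
      exact muE_congr _ (by omega) (by omega)

lemma superE_two_A : superE 2 .A 0 3 = A16.N := by decide

lemma superE_three_N : superE 3 .N 0 2 = A16.A := by decide

lemma superE_one_A : superE 1 .A 0 0 = A16.A := by decide

/-- T_k embeds in U_{k+2} at (0, 3·2^k). -/
lemma T_in_U (k a b : ℕ) (ha : a < 2 ^ k) (hb : b < 2 ^ k) :
    superE (k + 2) .A a (3 * 2 ^ k + b) = Tfun k a b := by
  have := superE_add k 2 .A 0 3 a b ha hb
  rw [superE_two_A] at this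
  simpa [Tfun, Nat.mul_comm] using this

/-- U_K embeds in T_{K+3} at (0, 2·2^K). -/
lemma U_in_T (K a b : ℕ) (ha : a < 2 ^ K) (hb : b < 2 ^ K) :
    Tfun (K + 3) a (2 * 2 ^ K + b) = superE K .A a b := by
  have := superE_add K 3 .N 0 2 a b ha hb
  rw [superE_three_N] at this
  simpa [Tfun, Nat.mul_comm] using this

/-- U is monotone: corner-fixed. -/
lemma U_mono (K a b : ℕ) (ha : a < 2 ^ K) (hb : b < 2 ^ K) :
    superE (K + 1) .A a b = superE K .A a b := by
  have := superE_add K 1 .A 0 0 a b ha hb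
  rw [superE_one_A] at this
  simpa using this

lemma U_mono' (K K' a b : ℕ) (hK : K ≤ K') (ha : a < 2 ^ K) (hb : b < 2 ^ K) :
    superE K' .A a b = superE K .A a b := by
  obtain ⟨t, rfl⟩ := Nat.exists_eq_add_of_le hK
  clear hK
  induction t with
  | zero => rfl
  | succ t ih =>
      have hle : (2:ℕ) ^ K ≤ 2 ^ (K + t) := Nat.pow_le_pow_right (by norm_num) (by omega)
      rw [show K + (t + 1) = (K + t) + 1 by omega,
        U_mono (K + t) a b (by omega) (by omega), ih]

/-- Membership in PT from an occurrence in U_K. -/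
lemma memPT_of_U {m n : ℕ} (q : Pat A16 m n) (K r c : ℕ)
    (hr : r + m ≤ 2 ^ K) (hc : c + n ≤ 2 ^ K)
    (hq : ∀ (i : Fin m) (j : Fin n), q i j = superE K .A (r + i) (c + j)) :
    q ∈ PT m n := by
  refine Set.mem_iUnion.2 ⟨K + 3, r, 2 * 2 ^ K + c, ?_, ?_, ?_⟩
  · calc r + m ≤ 2 ^ K := hr
      _ ≤ 2 ^ (K + 3) := Nat.pow_le_pow_right (by norm_num) (by omega)
  · have : (2:ℕ) ^ (K + 3) = 8 * 2 ^ K := by ring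
    omega
  · intro i j
    rw [hq i j, show 2 * 2 ^ K + c + (j : ℕ) = 2 * 2 ^ K + (c + j) by omega,
      U_in_T K (r + i) (c + j) (by omega) (by omega)]

/-- From PT, get an occurrence in some U_K with arbitrary extra room. -/
lemma U_of_memPT {m n : ℕ} (q : Pat A16 m n) (hq : q ∈ PT m n) (M : ℕ) :
    ∃ K r c, r + M ≤ 2 ^ K ∧ c + M ≤ 2 ^ K ∧
      ∀ (i : Fin m) (j : Fin n), q i j = superE K .A (r + i) (c + j) := by
  obtain ⟨k, r, c, hr, hc, h⟩ := Set.mem_iUnion.1 hq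
  set S := r + c + 2 * M with hS
  set t := k + 3 + S with ht
  have h1 : S + 1 ≤ 2 ^ S := Nat.lt_two_pow_self (n := S)
  have m1 : (2:ℕ) ^ (k + 2) ≤ 2 ^ (k + 2 + S) := Nat.pow_le_pow_right (by norm_num) (by omega)
  have m2 : (2:ℕ) ^ S ≤ 2 ^ (k + 2 + S) := Nat.pow_le_pow_right (by norm_num) (by omega)
  have m3 : (2:ℕ) ^ t = 2 * 2 ^ (k + 2 + S) := by rw [ht]; ring
  have m4 : (2:ℕ) ^ (k + 2) = 4 * 2 ^ k := by ring
  refine ⟨t, r, 3 * 2 ^ k + c, by omega, by omega, ?_⟩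
  intro i j
  have hik : r + (i : ℕ) < 2 ^ k := by omega
  have hjk : c + (j : ℕ) < 2 ^ k := by omega
  rw [h i j, show 3 * 2 ^ k + c + (j : ℕ) = 3 * 2 ^ k + (c + j) by omega,
    ← T_in_U k (r + i) (c + j) hik hjk]
  exact (U_mono' (k + 2) t (r + i) (3 * 2 ^ k + (c + j)) (by omega) (by omega) (by omega)).symm

lemma Pij_subset_PT (m n i j : ℕ) (hm : 1 ≤ m) (hn : 1 ≤ n)
    (hi : i = 1 ∨ i = 2) (hj : j = 1 ∨ j = 2) :
    Pij i j m n ⊆ PT m n := by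
  rintro q ⟨x, hx, hq⟩
  obtain ⟨K, r, c, hr, hc, h⟩ := U_of_memPT x hx (m + n)
  have h2 : (2:ℕ) ^ (K + 1) = 2 * 2 ^ K := by ring
  apply memPT_of_U q (K + 1) (2 * r + (i - 1)) (2 * c + (j - 1)) (by omega) (by omega)
  intro a b
  rw [hq a b]
  have hma : (i - 1 + (a : ℕ)) / 2 < m := by omega
  have hnb : (j - 1 + (b : ℕ)) / 2 < n := by omega
  show _ = muE (superE K .A ((2 * r + (i - 1) + a) / 2) ((2 * c + (j - 1) + b) / 2)) _ _
  unfold muPatE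
  rw [dif_pos (show 0 < m by omega), dif_pos (show 0 < n by omega)]
  simp only [Nat.mod_eq_of_lt hma, Nat.mod_eq_of_lt hnb]
  rw [h ⟨(i - 1 + (a : ℕ)) / 2, hma⟩ ⟨(j - 1 + (b : ℕ)) / 2, hnb⟩]
  show muE (superE K .A (r + (i - 1 + (a : ℕ)) / 2) (c + (j - 1 + (b : ℕ)) / 2)) _ _ = _
  rw [show (2 * r + (i - 1) + (a : ℕ)) / 2 = r + (i - 1 + (a : ℕ)) / 2 by omega,
    show (2 * c + (j - 1) + (b : ℕ)) / 2 = c + (j - 1 + (b : ℕ)) / 2 by omega]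
  exact muE_congr _ (by omega) (by omega)

lemma PT_subset (m n : ℕ) (hm : 1 ≤ m) (hn : 1 ≤ n) {q : Pat A16 m n} (hq : q ∈ PT m n) :
    ∃ i j, (i = 1 ∨ i = 2) ∧ (j = 1 ∨ j = 2) ∧ q ∈ Pij i j m n := by
  obtain ⟨K, r, c, hr, hc, h⟩ := U_of_memPT q hq (2 * m + 2 * n)
  have hK1 : 1 ≤ K := by
    by_contra h0
    have : K = 0 := by omega
    subst this
    simp at hr
    omega
  obtain ⟨K', rfl⟩ : ∃ K', K = K' + 1 := ⟨K - 1, by omega⟩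
  have h2 : (2:ℕ) ^ (K' + 1) = 2 * 2 ^ K' := by ring
  refine ⟨r % 2 + 1, c % 2 + 1, by omega, by omega,
    fun a b => superE K' .A (r / 2 + a) (c / 2 + b), ?_, ?_⟩
  · exact memPT_of_U _ K' (r / 2) (c / 2) (by omega) (by omega) (fun i j => rfl)
  · intro a b
    rw [h a b]
    have hma : (r % 2 + (a : ℕ)) / 2 < m := by omega
    have hnb : (c % 2 + (b : ℕ)) / 2 < n := by omega
    show muE (superE K' .A ((r + a) / 2) ((c + b) / 2)) (r + a) (c + b) = _
    unfold muPatE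
    rw [dif_pos (show 0 < m by omega), dif_pos (show 0 < n by omega)]
    simp only [Nat.add_sub_cancel]
    simp only [Nat.mod_eq_of_lt hma, Nat.mod_eq_of_lt hnb]
    show _ = muE (superE K' .A (r / 2 + (r % 2 + (a : ℕ)) / 2) (c / 2 + (c % 2 + (b : ℕ)) / 2))
      (r % 2 + a) (c % 2 + b)
    rw [show (r + (a : ℕ)) / 2 = r / 2 + (r % 2 + (a : ℕ)) / 2 by omega,
      show (c + (b : ℕ)) / 2 = c / 2 + (c % 2 + (b : ℕ)) / 2 by omega]
    exact muE_congr _ (by omega) (by omega)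

lemma PT_nonempty (m n : ℕ) : (PT m n).Nonempty := by
  refine ⟨fun a b => Tfun (m + n) a b, Set.mem_iUnion.2 ⟨m + n, 0, 0, ?_, ?_, fun i j => by simp⟩⟩
  · have : m + n < 2 ^ (m + n) := Nat.lt_two_pow_self (n := m + n)
    omega
  · have : m + n < 2 ^ (m + n) := Nat.lt_two_pow_self (n := m + n)
    omega

lemma cls_of_Pij {m n i j : ℕ} (hm : 1 ≤ m) (hn : 1 ≤ n)
    (hi : i = 1 ∨ i = 2) (hj : j = 1 ∨ j = 2) {q : Pat A16 m n}
    (hq : q ∈ Pij i j m n) : cls (q ⟨0, hm⟩ ⟨0, hn⟩) = (i - 1, j - 1) := by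
  obtain ⟨x, hx, h⟩ := hq
  rw [h ⟨0, hm⟩ ⟨0, hn⟩]
  unfold muPatE
  rw [dif_pos (show 0 < m by omega), dif_pos (show 0 < n by omega)]
  rw [cls_muE]
  have : (i - 1 + ((⟨0, hm⟩ : Fin m) : ℕ)) % 2 = i - 1 := by simp; omega
  have h' : (j - 1 + ((⟨0, hn⟩ : Fin n) : ℕ)) % 2 = j - 1 := by simp; omega
  rw [this, h']

/-- Lemma 3.4: for m, n ≥ 1, P(T, m×n) is the union of the sets
P_{i,j}(T, m×n) for i,j ∈ {1,2}, which are non-empty and pairwise disjoint. -/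
theorem disjoint_Pij_T (m n : ℕ) (hm : 1 ≤ m) (hn : 1 ≤ n) :
    (PT m n = ⋃ i ∈ ({1, 2} : Set ℕ), ⋃ j ∈ ({1, 2} : Set ℕ), Pij i j m n) ∧
    (∀ i ∈ ({1, 2} : Set ℕ), ∀ j ∈ ({1, 2} : Set ℕ), (Pij i j m n).Nonempty) ∧
    (∀ i ∈ ({1, 2} : Set ℕ), ∀ j ∈ ({1, 2} : Set ℕ),
      ∀ i' ∈ ({1, 2} : Set ℕ), ∀ j' ∈ ({1, 2} : Set ℕ),
        (i, j) ≠ (i', j') → Disjoint (Pij i j m n) (Pij i' j' m n)) := by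
  
  have hset : ∀ i : ℕ, i ∈ ({1, 2} : Set ℕ) ↔ (i = 1 ∨ i = 2) := by
    intro i; simp [Set.mem_insert_iff]
  refine ⟨?_, ?_, ?_⟩
  · ext q
    simp only [Set.mem_iUnion, exists_prop, hset]
    constructor
    · intro hq
      obtain ⟨i, j, hi, hj, hmem⟩ := PT_subset m n hm hn hq
      exact ⟨i, hi, j, hj, hmem⟩
    · rintro ⟨i, hi, j, hj, hmem⟩
      exact Pij_subset_PT m n i j hm hn hi hj hmem
  · intro i _ j _
    obtain ⟨x, hx⟩ := PT_nonempty m n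
    exact ⟨fun a b => muPatE x (i - 1 + a) (j - 1 + b), x, hx, fun a b => rfl⟩
  · intro i hi j hj i' hi' j' hj' hne
    rw [hset] at hi hi'
    rw [hset] at hj hj'
    rw [Set.disjoint_left]
    intro q hq hq'
    have e1 := cls_of_Pij hm hn hi hj hq
    have e2 := cls_of_Pij hm hn hi' hj' hq'
    rw [e1] at e2
    rw [Prod.mk.injEq] at e2
    exact hne (by rw [Prod.mk.injEq]; omega)
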